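/- (Heath-Brown identity) For any K ≥ 1, on the interval [x, 2x] one has the identity Λ = Σ_{j=1}^{K} (−1)^{j−1} C(K,j) μ_≤^{⋆j} ⋆ 1^{⋆(j−1)} ⋆ L, where μ_≤(n) = μ(n)·1_{n ≤ (2x)^{1/K}}, 1 is the constant function 1, L(n) = log n, and ⋆ denotes Dirichlet convolution with f^{⋆j} the j-fold Dirichlet convolution of f. -/

import Mathlib

open ArithmeticFunction

/-- Dirichlet convolution of two arithmetic functions `ℕ → ℝ`. -/
noncomputable def dconv (f g : ℕ → ℝ) : ℕ → ℝ :=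
  fun n => ∑ d ∈ n.divisors, f d * g (n / d)

/-- `j`-fold Dirichlet convolution of `f` (with `f^{⋆0}` the Dirichlet unit `δ`). -/
noncomputable def diter (f : ℕ → ℝ) : ℕ → (ℕ → ℝ)
  | 0 => fun n => if n = 1 then 1 else 0
  | (j + 1) => dconv f (diter f j)

lemma dconv_coe (F G : ArithmeticFunction ℝ) : dconv (⇑F) (⇑G) = ⇑(F * G) := by
  funext n
  rw [ArithmeticFunction.mul_apply]
  exact (Nat.sum_divisorsAntidiagonal (fun a b => F a * G b)).symm

lemma diter_coe (F : ArithmeticFunction ℝ) (j : ℕ) : diter (⇑F) j = ⇑(F ^ j) := by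
  induction j with
  | zero => funext n; simp [diter, ArithmeticFunction.one_apply]
  | succ j ih => rw [diter, ih, dconv_coe, ← pow_succ']

/-- scalar as an arithmetic function supported at 1 -/
noncomputable def sc (c : ℝ) : ArithmeticFunction ℝ := ⟨fun x => if x = 1 then c else 0, by simp⟩

lemma sc_apply (c : ℝ) (x : ℕ) : sc c x = if x = 1 then c else 0 := rfl

lemma sc_mul_apply (c : ℝ) (F : ArithmeticFunction ℝ) (n : ℕ) : (sc c * F) n = c * F n := by
  rw [ArithmeticFunction.mul_apply, Finset.sum_eq_single (1, n)]
  · simp [sc_apply]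
  · rintro ⟨a, b⟩ hab hne
    rw [Nat.mem_divisorsAntidiagonal] at hab
    have ha : a ≠ 1 := by
      rintro rfl
      exact hne (by simpa using congrArg (Prod.mk 1) (by simpa using hab.1))
    simp [sc_apply, ha]
  · intro h
    rw [Nat.mem_divisorsAntidiagonal] at h
    push_neg at h
    have : n = 0 := by simpa using h
    simp [this, sc_apply]

lemma sc_one : sc 1 = 1 := by
  ext n; simp [sc_apply, ArithmeticFunction.one_apply]

lemma sc_mul (a b : ℝ) : sc a * sc b = sc (a * b) := by
  ext n
  rw [sc_mul_apply]
  simp [sc_apply, mul_ite]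

lemma sc_add (a b : ℝ) : sc a + sc b = sc (a + b) := by
  ext n
  simp only [ArithmeticFunction.add_apply, sc_apply]
  split <;> simp

lemma sc_natCast (m : ℕ) : ((m : ℕ) : ArithmeticFunction ℝ) = sc m := by
  induction m with
  | zero => ext n; simp [sc_apply]
  | succ m ih => rw [Nat.cast_succ, ih, ← sc_one, sc_add]; norm_num

lemma sc_neg (a : ℝ) : sc (-a) = -sc a := by
  ext n
  simp only [sc_apply]
  have : (-sc a) n = -(sc a n) := rfl
  rw [this, sc_apply]
  split <;> simp

lemma sc_pow (a : ℝ) (k : ℕ) : (sc a) ^ k = sc (a ^ k) := by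
  induction k with
  | zero => simp [sc_one]
  | succ k ih => rw [pow_succ, pow_succ, ih, sc_mul]

lemma AF_sub_apply (F G : ArithmeticFunction ℝ) (n : ℕ) : (F - G) n = F n - G n := by
  rw [sub_eq_add_neg, ArithmeticFunction.add_apply, sub_eq_add_neg]
  rfl

lemma AF_sum_apply {ι : Type*} (s : Finset ι) (F : ι → ArithmeticFunction ℝ) (n : ℕ) :
    (∑ j ∈ s, F j) n = ∑ j ∈ s, F j n := by
  induction s using Finset.cons_induction with
  | empty => simp
  | cons a s ha ih => simp [Finset.sum_cons, ArithmeticFunction.add_apply, ih]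

lemma pow_vanish (F : ArithmeticFunction ℝ) (z : ℝ) (hz : 1 ≤ z)
    (h : ∀ m : ℕ, (m : ℝ) ≤ z → F m = 0) :
    ∀ K : ℕ, 1 ≤ K → ∀ n : ℕ, (n : ℝ) ≤ z ^ K → (F ^ K) n = 0 := by
  have hz0 : (0 : ℝ) < z := lt_of_lt_of_le one_pos hz
  intro K
  induction K with
  | zero => intro h'; omega
  | succ K ih =>
    intro _ n hn
    rcases Nat.eq_zero_or_pos K with rfl | hK
    · rw [pow_one]
      exact h n (by simpa using hn)
    · rw [pow_succ', ArithmeticFunction.mul_apply]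
      apply Finset.sum_eq_zero
      rintro ⟨a, b⟩ hp
      rw [Nat.mem_divisorsAntidiagonal] at hp
      rcases le_or_gt (a : ℝ) z with ha | ha
      · rw [h a ha, zero_mul]
      · have hab : (a : ℝ) * b = n := by exact_mod_cast congrArg (Nat.cast (R := ℝ)) hp.1
        have hzK : (0 : ℝ) < z ^ K := pow_pos hz0 K
        have hb0 : (0 : ℝ) ≤ (b : ℝ) := Nat.cast_nonneg b
        have hb : (b : ℝ) ≤ z ^ K := by
          rw [pow_succ'] at hn
          nlinarith
        rw [ih hK b hb, mul_zero]

/-- The Heath-Brown identity: for any `K ≥ 1`, on the interval `[x, 2x]` one has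
`Λ = Σ_{j=1}^{K} (−1)^{j−1} C(K,j) μ_≤^{⋆j} ⋆ 1^{⋆(j−1)} ⋆ L`, with
`μ_≤(n) = μ(n)·1_{n ≤ (2x)^{1/K}}`, `L(n) = log n`. -/
theorem heath_brown_identity (x : ℝ) (hx : 1 ≤ x) (K : ℕ) (hK : 1 ≤ K)
    (n : ℕ) (hn1 : x ≤ (n : ℝ)) (hn2 : (n : ℝ) ≤ 2 * x) :
    Λ n = ∑ j ∈ Finset.Icc 1 K, (-1 : ℝ) ^ (j - 1) * (K.choose j : ℝ) *
      dconv
        (diter (fun m => if (m : ℝ) ≤ (2 * x) ^ ((1 : ℝ) / (K : ℝ))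
          then ((moebius m : ℤ) : ℝ) else 0) j)
        (dconv (diter (fun m => if m = 0 then 0 else 1) (j - 1))
          (fun m => Real.log m)) n := by
  have hK0 : (0 : ℝ) < (K : ℝ) := by exact_mod_cast hK
  set z : ℝ := (2 * x) ^ ((1 : ℝ) / (K : ℝ)) with hzdef
  have h2x : (1 : ℝ) ≤ 2 * x := by linarith
  have hz1 : 1 ≤ z := Real.one_le_rpow h2x (le_of_lt (div_pos one_pos hK0))
  have hzK : z ^ K = 2 * x := by
    rw [hzdef, ← Real.rpow_natCast ((2 * x) ^ ((1 : ℝ) / (K : ℝ))) K,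
      ← Real.rpow_mul (by linarith), one_div, inv_mul_cancel₀ (ne_of_gt hK0), Real.rpow_one]
  -- arithmetic-function versions of the ingredients
  set Mle : ArithmeticFunction ℝ :=
    ⟨fun m => if (m : ℝ) ≤ z then ((moebius m : ℤ) : ℝ) else 0, by simp⟩ with hMledef
  set Zr : ArithmeticFunction ℝ := ((zeta : ArithmeticFunction ℕ) : ArithmeticFunction ℝ) with hZrdef
  set Mr : ArithmeticFunction ℝ := ((moebius : ArithmeticFunction ℤ) : ArithmeticFunction ℝ) with hMrdef
  have e1 : (fun m : ℕ => if (m : ℝ) ≤ z then ((moebius m : ℤ) : ℝ) else 0) = ⇑Mle := rfl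
  have e2 : (fun m : ℕ => if m = 0 then (0 : ℝ) else 1) = ⇑Zr := by
    funext m
    rw [hZrdef, ArithmeticFunction.natCoe_apply, ArithmeticFunction.zeta_apply]
    split <;> simp
  have e3 : (fun m : ℕ => Real.log m) = ⇑(ArithmeticFunction.log) := by
    funext m; rw [ArithmeticFunction.log_apply]
  rw [e1, e2, e3]
  simp only [diter_coe, dconv_coe]
  -- basic identities
  have hZM : Zr * Mr = 1 := coe_zeta_mul_coe_moebius
  have hLM : ArithmeticFunction.log * Mr = Λ := log_mul_moebius_eq_vonMangoldt
  set A : ArithmeticFunction ℝ := Mle * Zr with hAdef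
  -- each term
  have hterm : ∀ j ∈ Finset.Icc 1 K,
      (-1 : ℝ) ^ (j - 1) * (K.choose j : ℝ) * ((Mle ^ j * (Zr ^ (j - 1) * ArithmeticFunction.log)) n)
        = (sc ((-1 : ℝ) ^ (j - 1) * (K.choose j : ℝ)) * (A ^ j * Λ)) n := by
    intro j hj
    have hj1 : 1 ≤ j := (Finset.mem_Icc.mp hj).1
    obtain ⟨i, rfl⟩ : ∃ i, j = i + 1 := ⟨j - 1, by omega⟩
    have hinner : Mle ^ (i + 1) * (Zr ^ (i + 1 - 1) * ArithmeticFunction.log)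
        = A ^ (i + 1) * Λ := by
      have : A ^ (i + 1) * Λ
          = Mle ^ (i + 1) * (Zr ^ i * ArithmeticFunction.log) * (Zr * Mr) := by
        rw [← hLM, hAdef]; ring
      rw [this, hZM, mul_one]
      norm_num
    rw [hinner, sc_mul_apply]
  rw [Finset.sum_congr rfl hterm, ← AF_sum_apply]
  -- binomial expansion
  have hnegA : -A = sc (-1) * A := by rw [sc_neg, sc_one]; ring
  have hbin : (1 - A) ^ K
      = ∑ k ∈ Finset.range (K + 1), sc ((-1 : ℝ) ^ k * (K.choose k : ℝ)) * A ^ k := by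
    have h1 : (1 - A) = (-A) + 1 := by ring
    rw [h1, add_pow]
    refine Finset.sum_congr rfl fun k hk => ?_
    rw [one_pow, mul_one, hnegA, mul_pow, sc_pow, sc_natCast, ← sc_mul]
    ring
  have hsplit : Finset.range (K + 1) = insert 0 (Finset.Icc 1 K) := by
    ext m; simp only [Finset.mem_range, Finset.mem_insert, Finset.mem_Icc]; omega
  have hbin2 : (1 - A) ^ K
      = 1 + ∑ k ∈ Finset.Icc 1 K, sc ((-1 : ℝ) ^ k * (K.choose k : ℝ)) * A ^ k := by
    rw [hbin, hsplit, Finset.sum_insert (by simp)]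
    norm_num [sc_one]
  have hS : (∑ j ∈ Finset.Icc 1 K, sc ((-1 : ℝ) ^ (j - 1) * (K.choose j : ℝ)) * (A ^ j * Λ))
      = Λ - (1 - A) ^ K * Λ := by
    rw [hbin2, add_mul, one_mul, Finset.sum_mul, sub_add_eq_sub_sub, sub_self, zero_sub,
      ← Finset.sum_neg_distrib]
    refine Finset.sum_congr rfl fun k hk => ?_
    have hk1 : 1 ≤ k := (Finset.mem_Icc.mp hk).1
    obtain ⟨i, rfl⟩ : ∃ i, k = i + 1 := ⟨k - 1, by omega⟩
    have hsign : (-1 : ℝ) ^ (i + 1 - 1) * (K.choose (i + 1) : ℝ)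
        = -((-1 : ℝ) ^ (i + 1) * (K.choose (i + 1) : ℝ)) := by
      simp [pow_succ]
    rw [hsign, sc_neg]
    ring
  rw [hS, AF_sub_apply]
  -- vanishing of (1 - A)^K * Λ at n
  have hn0 : n ≠ 0 := by
    rintro rfl
    simp only [Nat.cast_zero] at hn1
    linarith
  have hzero : ∀ m : ℕ, (m : ℝ) ≤ z → (1 - A) m = 0 := by
    intro m hm
    rcases Nat.eq_zero_or_pos m with rfl | hm0
    · exact ArithmeticFunction.map_zero
    · have hAm : A m = (Mr * Zr) m := by
        rw [hAdef, ArithmeticFunction.mul_apply, ArithmeticFunction.mul_apply]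
        refine Finset.sum_congr rfl fun p hp => ?_
        rw [Nat.mem_divisorsAntidiagonal] at hp
        have hdvd : p.1 ∣ m := ⟨p.2, hp.1.symm⟩
        have hple : (p.1 : ℝ) ≤ z :=
          le_trans (Nat.cast_le.mpr (Nat.le_of_dvd hm0 hdvd)) hm
        have : Mle p.1 = Mr p.1 := by
          rw [hMledef, hMrdef]
          simp only [ArithmeticFunction.coe_mk, ArithmeticFunction.intCoe_apply, if_pos hple]
        rw [this]
      rw [AF_sub_apply, hAm, mul_comm, hZM]
      exact sub_self _
  have hvanish : ((1 - A) ^ K * Λ) n = 0 := by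
    rw [ArithmeticFunction.mul_apply]
    apply Finset.sum_eq_zero
    rintro ⟨a, b⟩ hp
    rw [Nat.mem_divisorsAntidiagonal] at hp
    have hale : (a : ℝ) ≤ z ^ K := by
      rw [hzK]
      refine le_trans ?_ hn2
      exact_mod_cast Nat.le_of_dvd (Nat.pos_of_ne_zero hn0) ⟨b, hp.1.symm⟩
    rw [pow_vanish (1 - A) z hz1 hzero K hK a hale, zero_mul]
  rw [hvanish, sub_zero]
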